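/- If the sample threshold is σ = c·log n for a constant c ≥ 8, then over all at most log₂(n/λ) + 1 chunks used during the hash bag's lifetime, the probability that any chunk resizes while less than half-expected-full, or fails to resize after twice-expected-full, is at most 2(log₂ n + 1)·n^{−c/8}, which is at most 1/n for c ≥ 16 and n sufficiently large. -/

import Mathlib

open MeasureTheory

/-- Union bound over chunks: with sample threshold `σ = c·log n`, `c ≥ 8`,
and at most `K ≤ log₂(n/λ) + 1` chunks, each chunk resizing prematurely
(event `A i`, probability ≤ `exp(−σ/8)`) or failing to resize in time
(event `B i`, probability ≤ `exp(−σ/4)`), the probability that any bad event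
occurs is at most `2(log₂ n + 1)·n^(−c/8)`; moreover for `c ≥ 16` this bound
is at most `1/n` for all sufficiently large `n`. -/
theorem hashbag_union_bound {Ω : Type*} [MeasurableSpace Ω]
    (μ : Measure Ω) [IsProbabilityMeasure μ]
    (n lam : ℕ) (hn : 2 ≤ n) (hlam : 1 ≤ lam) (hlamn : lam ≤ n)
    (c σ : ℝ) (hc : 8 ≤ c) (hσ : σ = c * Real.log n)
    (K : ℕ) (hK : (K : ℝ) ≤ Real.logb 2 ((n : ℝ) / lam) + 1)
    (A B : ℕ → Set Ω)
    (hA : ∀ i, μ (A i) ≤ ENNReal.ofReal (Real.exp (-σ / 8)))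
    (hB : ∀ i, μ (B i) ≤ ENNReal.ofReal (Real.exp (-σ / 4))) :
    μ (⋃ i ∈ Finset.range K, A i ∪ B i)
      ≤ ENNReal.ofReal (2 * (Real.logb 2 n + 1) * (n : ℝ) ^ (-c / 8)) ∧
    (16 ≤ c → ∃ N : ℕ, ∀ n' : ℕ, N ≤ n' →
      2 * (Real.logb 2 n' + 1) * (n' : ℝ) ^ (-c / 8) ≤ 1 / n') := by
  have hn1 : (1 : ℝ) ≤ (n : ℝ) := by exact_mod_cast Nat.one_le_of_lt hn
  have hnpos : (0 : ℝ) < (n : ℝ) := by linarith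
  have hlogn : 0 ≤ Real.log n := Real.log_nonneg hn1
  have hσ0 : 0 ≤ σ := by rw [hσ]; positivity
  have hexp : Real.exp (-σ / 4) ≤ Real.exp (-σ / 8) := by
    apply Real.exp_le_exp.2; linarith
  have hrpow : (n : ℝ) ^ (-c / 8) = Real.exp (-σ / 8) := by
    rw [Real.rpow_def_of_pos hnpos, hσ]; ring_nf
  have hrpow_pos : 0 < (n : ℝ) ^ (-c / 8) := Real.rpow_pos_of_pos hnpos _
  have hKle : (K : ℝ) ≤ Real.logb 2 n + 1 := by
    refine hK.trans (add_le_add ?_ le_rfl)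
    apply Real.logb_le_logb_of_le (by norm_num) (by positivity)
    rw [div_le_iff₀ (by exact_mod_cast hlam : (0:ℝ) < lam)]
    nlinarith [hn1, (by exact_mod_cast hlam : (1:ℝ) ≤ (lam:ℝ))]
  constructor
  · calc μ (⋃ i ∈ Finset.range K, A i ∪ B i)
        ≤ ∑ i ∈ Finset.range K, μ (A i ∪ B i) := measure_biUnion_finset_le _ _
      _ ≤ ∑ i ∈ Finset.range K,
            (ENNReal.ofReal (Real.exp (-σ / 8)) + ENNReal.ofReal (Real.exp (-σ / 4))) :=
          Finset.sum_le_sum fun i _ =>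
            (measure_union_le _ _).trans (add_le_add (hA i) (hB i))
      _ = (K : ℕ) • (ENNReal.ofReal (Real.exp (-σ / 8)) + ENNReal.ofReal (Real.exp (-σ / 4))) := by
          simp
      _ = ENNReal.ofReal ((K : ℝ) * (Real.exp (-σ / 8) + Real.exp (-σ / 4))) := by
          rw [nsmul_eq_mul, ← ENNReal.ofReal_add (Real.exp_nonneg _) (Real.exp_nonneg _),
            ← ENNReal.ofReal_natCast K,
            ← ENNReal.ofReal_mul (by positivity)]
      _ ≤ ENNReal.ofReal (2 * (Real.logb 2 n + 1) * (n : ℝ) ^ (-c / 8)) := by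
          apply ENNReal.ofReal_le_ofReal
          rw [hrpow]
          have hK0 : (0 : ℝ) ≤ (K : ℝ) := Nat.cast_nonneg K
          nlinarith [Real.exp_nonneg (-σ / 8)]
  · intro hc16
    refine ⟨49, fun m hm => ?_⟩
    have hm1 : (1 : ℝ) ≤ (m : ℝ) := by exact_mod_cast le_trans (by norm_num) hm
    have hm49 : (49 : ℝ) ≤ (m : ℝ) := by exact_mod_cast hm
    have hmpos : (0 : ℝ) < (m : ℝ) := by linarith
    -- logb 2 m ≤ 3 * sqrt m
    have hsq : Real.sqrt m * Real.sqrt m = (m : ℝ) := Real.mul_self_sqrt hmpos.le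
    have hsq1 : 1 ≤ Real.sqrt m := by
      nlinarith [Real.sqrt_nonneg (m : ℝ)]
    have hlog : Real.log m ≤ 2 * Real.sqrt m := by
      have h1 : Real.log (Real.sqrt m) = Real.log m / 2 := Real.log_sqrt hmpos.le
      have h2 : Real.log (Real.sqrt m) ≤ Real.sqrt m - 1 :=
        Real.log_le_sub_one_of_pos (by linarith)
      linarith
    have hlog2 : (2:ℝ)/3 ≤ Real.log 2 := by
      have := Real.log_two_gt_d9; linarith
    have hlogb : Real.logb 2 m ≤ 3 * Real.sqrt m := by
      rw [Real.logb, div_le_iff₀ (by linarith : (0:ℝ) < Real.log 2)]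
      nlinarith [Real.sqrt_nonneg (m : ℝ)]
    -- 2 * (logb 2 m + 1) ≤ m
    have hcoef : 2 * (Real.logb 2 m + 1) ≤ (m : ℝ) := by
      have : 6 * Real.sqrt m + 2 ≤ (m : ℝ) := by nlinarith
      linarith
    -- m ^ (-c/8) ≤ m ^ (-2)
    have hpow : (m : ℝ) ^ (-c / 8) ≤ (m : ℝ) ^ (-2 : ℝ) :=
      Real.rpow_le_rpow_of_exponent_le hm1 (by linarith)
    have hpow2 : (m : ℝ) ^ (-2 : ℝ) = 1 / ((m:ℝ) * m) := by
      rw [Real.rpow_neg hmpos.le, Real.rpow_two]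
      field_simp [sq]
    have hpow_pos : 0 < (m : ℝ) ^ (-c / 8) := Real.rpow_pos_of_pos hmpos _
    have hcoef0 : 0 ≤ 2 * (Real.logb 2 m + 1) := by
      have : 0 ≤ Real.logb 2 m := Real.logb_nonneg (by norm_num) hm1
      linarith
    calc 2 * (Real.logb 2 m + 1) * (m : ℝ) ^ (-c / 8)
        ≤ (m : ℝ) * ((m:ℝ) ^ (-2:ℝ)) := by
          apply mul_le_mul hcoef hpow hpow_pos.le hmpos.le
      _ = 1 / m := by rw [hpow2]; field_simp
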